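/- Let G be a forest with distant edge {n-1,n} where n is a distant leaf, let G_2 be the induced subgraph on V(G)\{n-1,n} and G_3 the induced subgraph on V(G)\{n-2,n-1,n} (where n-2 is the unique non-leaf neighbor of n-1, if any). Then for 1 ≤ k ≤ ν(G): aim(G,k) = max{ aim(G_1,k), aim(G_2,k-1)+1, aim(G_3,k)+1 }, where G_1 is the induced subgraph on V(G)\{n}. -/

import Mathlib

open scoped Classical

noncomputable section

/-- `M` is a matching of `G`: a set of edges of `G` that are pairwise vertex-disjoint. -/
def IsMatchingSet {V : Type*} (G : SimpleGraph V) (M : Finset (Sym2 V)) : Prop :=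
  (∀ e ∈ M, e ∈ G.edgeSet) ∧
    ∀ e ∈ M, ∀ f ∈ M, e ≠ f → ∀ v : V, v ∈ e → v ∉ f

/-- The matching number `ν(G)`: the maximum size of a matching of `G`. -/
def matchingNumber {V : Type*} [Fintype V] (G : SimpleGraph V) : ℕ :=
  sSup {k | ∃ M : Finset (Sym2 V), IsMatchingSet G M ∧ M.card = k}

/-- Two edges `e, f` form a gap in `G`: they are vertex-disjoint and no edge of `G`
joins an endpoint of `e` to an endpoint of `f` (an induced matching of size 2). -/
def IsGap {V : Type*} (G : SimpleGraph V) (e f : Sym2 V) : Prop :=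
  (∀ v : V, v ∈ e → v ∉ f) ∧ ∀ u v : V, u ∈ e → v ∈ f → ¬ G.Adj u v

/-- The set of vertices covered by a set of edges `M`. -/
def matchVerts {V : Type*} (M : Finset (Sym2 V)) : Set V := {v | ∃ e ∈ M, v ∈ e}

/-- `M` is a `k`-admissible matching of `G`: a matching admitting a partition into
nonempty parts `M₁, …, M_r` such that edges from distinct parts form gaps in `G`,
`|M₁| + ⋯ + |M_r| ≤ r + k - 1`, and the induced subgraph on the vertices of each
part is a forest. -/
def IsAdmissibleMatching {V : Type*} (G : SimpleGraph V) (k : ℕ)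
    (M : Finset (Sym2 V)) : Prop :=
  IsMatchingSet G M ∧
    ∃ P : Finset (Finset (Sym2 V)),
      (∀ p ∈ P, p.Nonempty) ∧
      (∀ p ∈ P, ∀ q ∈ P, p ≠ q → Disjoint p q) ∧
      P.biUnion id = M ∧
      (∀ p ∈ P, ∀ q ∈ P, p ≠ q → ∀ e ∈ p, ∀ f ∈ q, IsGap G e f) ∧
      M.card + 1 ≤ P.card + k ∧
      ∀ p ∈ P, (SimpleGraph.induce (matchVerts p) G).IsAcyclic

/-- The `k`-admissible matching number `aim(G,k)`: the maximum size of a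
`k`-admissible matching of `G` (`0` if none exists). -/
def aim {V : Type*} [Fintype V] (G : SimpleGraph V) (k : ℕ) : ℕ :=
  sSup {m | ∃ M : Finset (Sym2 V), IsAdmissibleMatching G k M ∧ M.card = m}


/-- The graph obtained from `G` by deleting the vertices in `s` (keeping the same
vertex type; deleted vertices become isolated). -/
def delV {V : Type*} (G : SimpleGraph V) (s : Set V) : SimpleGraph V where
  Adj u v := G.Adj u v ∧ u ∉ s ∧ v ∉ s
  symm := ⟨fun u v h => ⟨h.1.symm, h.2.2, h.2.1⟩⟩
  loopless := ⟨fun v h => G.loopless.irrefl v h.1⟩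

section Aux
variable {V : Type*}

lemma isGap_symm {G : SimpleGraph V} {e f : Sym2 V} (h : IsGap G e f) : IsGap G f e := by
  refine ⟨fun v hv hve => h.1 v hve hv, fun u v hu hv hadj => h.2 v u hv hu hadj.symm⟩

lemma empty_admissible (G : SimpleGraph V) (k : ℕ) (hk : 1 ≤ k) :
    IsAdmissibleMatching G k (∅ : Finset (Sym2 V)) := by
  refine ⟨⟨by simp, by simp⟩, ∅, by simp, by simp, by simp, by simp, by simpa using hk, by simp⟩

lemma aim_bdd [Fintype V] (G : SimpleGraph V) (k : ℕ) :
    BddAbove {m | ∃ M : Finset (Sym2 V), IsAdmissibleMatching G k M ∧ M.card = m} := by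
  classical
  refine ⟨Fintype.card (Sym2 V), fun m hm => ?_⟩
  obtain ⟨M, _, rfl⟩ := hm
  exact Finset.card_le_univ M

lemma le_aim [Fintype V] {G : SimpleGraph V} {k : ℕ} {M : Finset (Sym2 V)}
    (h : IsAdmissibleMatching G k M) : M.card ≤ aim G k :=
  le_csSup (aim_bdd G k) ⟨M, h, rfl⟩

lemma exists_aim [Fintype V] (G : SimpleGraph V) (k : ℕ) (hk : 1 ≤ k) :
    ∃ M : Finset (Sym2 V), IsAdmissibleMatching G k M ∧ M.card = aim G k :=
  by
  have h0 : (0:ℕ) ∈ {m | ∃ M : Finset (Sym2 V), IsAdmissibleMatching G k M ∧ M.card = m} :=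
    ⟨∅, empty_admissible G k hk, by simp⟩
  exact Nat.sSup_mem ⟨0, h0⟩ (aim_bdd G k)

end Aux

section Aux2
variable {V : Type*}

lemma acyclic_mono {G H : SimpleGraph V} (hle : ∀ a b, H.Adj a b → G.Adj a b)
    (hG : G.IsAcyclic) : H.IsAcyclic := by
  intro v c hc
  let f : H →g G := ⟨id, fun h => hle _ _ h⟩
  have hinj : Function.Injective f := fun a b h => h
  exact hG (c.map f) (hc.map hinj)

lemma acyclic_induce {G : SimpleGraph V} (hG : G.IsAcyclic) (s : Set V) :
    (SimpleGraph.induce s G).IsAcyclic := by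
  intro v c hc
  let f : (SimpleGraph.induce s G) →g G := ⟨Subtype.val, fun h => h⟩
  have hinj : Function.Injective f := fun a b h => Subtype.val_injective h
  exact hG (c.map f) (hc.map hinj)

lemma delV_adj {G : SimpleGraph V} {s : Set V} {u v : V} :
    (delV G s).Adj u v ↔ G.Adj u v ∧ u ∉ s ∧ v ∉ s := Iff.rfl

lemma mem_edgeSet_delV {G : SimpleGraph V} {s : Set V} {e : Sym2 V} :
    e ∈ (delV G s).edgeSet ↔ e ∈ G.edgeSet ∧ ∀ v ∈ e, v ∉ s := by
  induction e using Sym2.ind with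
  | _ a b =>
    simp only [SimpleGraph.mem_edgeSet, delV_adj, Sym2.mem_iff]
    constructor
    · rintro ⟨h, ha, hb⟩
      exact ⟨h, by rintro v (rfl|rfl) <;> assumption⟩
    · rintro ⟨h, hv⟩
      exact ⟨h, hv a (Or.inl rfl), hv b (Or.inr rfl)⟩

/-- Push an admissible matching down into `delV G s` when all its edges avoid `s`. -/
lemma admissible_to_delV {G : SimpleGraph V} {k : ℕ} {M : Finset (Sym2 V)} (s : Set V)
    (h : IsAdmissibleMatching G k M) (hav : ∀ e ∈ M, ∀ v ∈ e, v ∉ s) :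
    IsAdmissibleMatching (delV G s) k M := by
  obtain ⟨⟨hedge, hdisj⟩, P, hne, hpdisj, hbu, hgap, hcard, hac⟩ := h
  refine ⟨⟨fun e he => mem_edgeSet_delV.mpr ⟨hedge e he, hav e he⟩, hdisj⟩,
    P, hne, hpdisj, hbu, ?_, hcard, ?_⟩
  · intro p hp q hq hpq e he f hf
    obtain ⟨h1, h2⟩ := hgap p hp q hq hpq e he f hf
    exact ⟨h1, fun u v hu hv hadj => h2 u v hu hv hadj.1⟩
  · intro p hp
    exact acyclic_mono (fun a b hab => hab.1) (hac p hp)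

/-- Pull an admissible matching of `delV G s` up to `G`, when `G` is acyclic. -/
lemma admissible_from_delV {G : SimpleGraph V} {s : Set V} {k : ℕ} {M : Finset (Sym2 V)}
    (hG : G.IsAcyclic) (h : IsAdmissibleMatching (delV G s) k M) :
    IsAdmissibleMatching G k M := by
  obtain ⟨⟨hedge, hdisj⟩, P, hne, hpdisj, hbu, hgap, hcard, hac⟩ := h
  have hav : ∀ e ∈ M, ∀ v ∈ e, v ∉ s := fun e he => (mem_edgeSet_delV.mp (hedge e he)).2
  refine ⟨⟨fun e he => (mem_edgeSet_delV.mp (hedge e he)).1, hdisj⟩,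
    P, hne, hpdisj, hbu, ?_, hcard, fun p hp => acyclic_induce hG _⟩
  intro p hp q hq hpq e he f hf
  obtain ⟨h1, h2⟩ := hgap p hp q hq hpq e he f hf
  have heM : e ∈ M := by
    rw [← hbu]; exact Finset.mem_biUnion.mpr ⟨p, hp, he⟩
  have hfM : f ∈ M := by
    rw [← hbu]; exact Finset.mem_biUnion.mpr ⟨q, hq, hf⟩
  refine ⟨h1, fun u v hu hv hadj => h2 u v hu hv ⟨hadj, hav e heM u hu, hav f hfM v hv⟩⟩

end Aux2

section Aux3
variable {V : Type*}

lemma sym2_exists_mem (e : Sym2 V) : ∃ v, v ∈ e := by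
  induction e using Sym2.ind with
  | _ a b => exact ⟨a, Sym2.mem_mk_left a b⟩

lemma matchVerts_mono {M N : Finset (Sym2 V)} (h : M ⊆ N) : matchVerts M ⊆ matchVerts N :=
  fun v ⟨e, he, hve⟩ => ⟨e, h he, hve⟩

lemma acyclic_induce_subset {G : SimpleGraph V} {s t : Set V} (hst : s ⊆ t)
    (h : (SimpleGraph.induce t G).IsAcyclic) : (SimpleGraph.induce s G).IsAcyclic := by
  intro v c hc
  let f : (SimpleGraph.induce s G) →g (SimpleGraph.induce t G) :=
    ⟨Set.inclusion hst, fun hadj => hadj⟩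
  have hinj : Function.Injective f := Set.inclusion_injective hst
  exact h (c.map f) (hc.map hinj)

lemma leaf_edge {G : SimpleGraph V} {x y : V} (hx : ∀ z, G.Adj x z → z = y)
    {e : Sym2 V} (he : e ∈ G.edgeSet) (hxe : x ∈ e) : e = s(x, y) := by
  induction e using Sym2.ind with
  | _ a b =>
    rw [SimpleGraph.mem_edgeSet] at he
    rcases Sym2.mem_iff.mp hxe with rfl | rfl
    · rw [hx b he]
    · rw [hx a he.symm, Sym2.eq_swap]

/-- Insert an edge as a new singleton part. -/
lemma admissible_insert_single {G : SimpleGraph V} {k : ℕ} {M : Finset (Sym2 V)}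
    (hG : G.IsAcyclic) (h : IsAdmissibleMatching G k M) {e₀ : Sym2 V}
    (he₀ : e₀ ∈ G.edgeSet) (hgap : ∀ f ∈ M, IsGap G e₀ f) :
    IsAdmissibleMatching G k (insert e₀ M) ∧ e₀ ∉ M := by
  classical
  obtain ⟨⟨hedge, hdisj⟩, P, hne, hpdisj, hbu, hgapP, hcard, _⟩ := h
  have he₀M : e₀ ∉ M := by
    intro hmem
    obtain ⟨v, hv⟩ := sym2_exists_mem e₀
    exact (hgap e₀ hmem).1 v hv hv
  have hsP : ({e₀} : Finset (Sym2 V)) ∉ P := by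
    intro hmem
    apply he₀M
    rw [← hbu]
    exact Finset.mem_biUnion.mpr ⟨{e₀}, hmem, Finset.mem_singleton_self e₀⟩
  refine ⟨⟨⟨?_, ?_⟩, insert {e₀} P, ?_, ?_, ?_, ?_, ?_, fun p _ => acyclic_induce hG _⟩, he₀M⟩
  · intro e he
    rcases Finset.mem_insert.mp he with rfl | he
    · exact he₀
    · exact hedge e he
  · intro e he f hf hef v hve
    rcases Finset.mem_insert.mp he with he | he <;>
      rcases Finset.mem_insert.mp hf with hf | hf
    · exact absurd (he.trans hf.symm) hef
    · rw [he] at hve; exact (hgap f hf).1 v hve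
    · rw [hf]; intro hvf; exact (hgap e he).1 v hvf hve
    · exact hdisj e he f hf hef v hve
  · intro p hp
    rcases Finset.mem_insert.mp hp with rfl | hp
    · exact ⟨e₀, Finset.mem_singleton_self e₀⟩
    · exact hne p hp
  · intro p hp q hq hpq
    have key : ∀ q ∈ P, Disjoint ({e₀} : Finset (Sym2 V)) q := by
      intro q hq
      rw [Finset.disjoint_singleton_left]
      intro hmem
      apply he₀M; rw [← hbu]
      exact Finset.mem_biUnion.mpr ⟨q, hq, hmem⟩
    rcases Finset.mem_insert.mp hp with hp | hp <;>
      rcases Finset.mem_insert.mp hq with hq | hq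
    · exact absurd (hp.trans hq.symm) hpq
    · rw [hp]; exact key q hq
    · rw [hq]; exact (key p hp).symm
    · exact hpdisj p hp q hq hpq
  · rw [Finset.biUnion_insert, hbu]; exact (Finset.insert_eq e₀ M).symm
  · intro p hp q hq hpq e he f hf
    have hmem : ∀ r ∈ P, ∀ g ∈ r, g ∈ M := by
      intro r hr g hg; rw [← hbu]; exact Finset.mem_biUnion.mpr ⟨r, hr, hg⟩
    rcases Finset.mem_insert.mp hp with hp | hp <;>
      rcases Finset.mem_insert.mp hq with hq | hq
    · exact absurd (hp.trans hq.symm) hpq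
    · rw [hp, Finset.mem_singleton] at he; rw [he]
      exact hgap f (hmem q hq f hf)
    · rw [hq, Finset.mem_singleton] at hf; rw [hf]
      exact isGap_symm (hgap e (hmem p hp e he))
    · exact hgapP p hp q hq hpq e he f hf
  · rw [Finset.card_insert_of_notMem he₀M, Finset.card_insert_of_notMem hsP]
    omega

end Aux3

section Aux4
variable {V : Type*}

/-- Insert an edge, merging it into the part containing `f₀` (the only edge it may
fail to form a gap with). Costs one unit of `k`. -/
lemma admissible_insert_merge {G : SimpleGraph V} {k : ℕ} {M : Finset (Sym2 V)}
    (hG : G.IsAcyclic) (h : IsAdmissibleMatching G k M) {e₀ f₀ : Sym2 V}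
    (he₀ : e₀ ∈ G.edgeSet) (hf₀ : f₀ ∈ M)
    (hdisj₀ : ∀ f ∈ M, ∀ v ∈ e₀, v ∉ f)
    (hgap : ∀ f ∈ M, f ≠ f₀ → IsGap G e₀ f) :
    IsAdmissibleMatching G (k + 1) (insert e₀ M) ∧ e₀ ∉ M := by
  classical
  obtain ⟨⟨hedge, hdisj⟩, P, hne, hpdisj, hbu, hgapP, hcard, hac⟩ := h
  have hmem : ∀ r ∈ P, ∀ g ∈ r, g ∈ M := by
    intro r hr g hg; rw [← hbu]; exact Finset.mem_biUnion.mpr ⟨r, hr, hg⟩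
  have he₀M : e₀ ∉ M := by
    intro hmemM
    obtain ⟨v, hv⟩ := sym2_exists_mem e₀
    exact hdisj₀ e₀ hmemM v hv hv
  obtain ⟨p₀, hp₀P, hf₀p₀⟩ : ∃ p₀ ∈ P, f₀ ∈ p₀ := by
    rw [← hbu] at hf₀; exact Finset.mem_biUnion.mp hf₀
  have he₀p : ∀ r ∈ P, e₀ ∉ r := fun r hr hmm => he₀M (hmem r hr e₀ hmm)
  have hnotP : insert e₀ p₀ ∉ P.erase p₀ := by
    intro hmm
    exact he₀p _ (Finset.mem_of_mem_erase hmm) (Finset.mem_insert_self e₀ p₀)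
  refine ⟨⟨⟨?_, ?_⟩, insert (insert e₀ p₀) (P.erase p₀), ?_, ?_, ?_, ?_, ?_,
    fun p _ => acyclic_induce hG _⟩, he₀M⟩
  · intro e he
    rcases Finset.mem_insert.mp he with he | he
    · rw [he]; exact he₀
    · exact hedge e he
  · intro e he f hf hef v hve
    rcases Finset.mem_insert.mp he with he | he <;>
      rcases Finset.mem_insert.mp hf with hf | hf
    · exact absurd (he.trans hf.symm) hef
    · rw [he] at hve; exact hdisj₀ f hf v hve
    · rw [hf]; intro hvf; exact hdisj₀ e he v hvf hve
    · exact hdisj e he f hf hef v hve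
  · intro p hp
    rcases Finset.mem_insert.mp hp with hp | hp
    · rw [hp]; exact ⟨e₀, Finset.mem_insert_self e₀ p₀⟩
    · exact hne p (Finset.mem_of_mem_erase hp)
  · intro p hp q hq hpq
    have key : ∀ q ∈ P.erase p₀, Disjoint (insert e₀ p₀) q := by
      intro q hq
      rw [Finset.disjoint_insert_left]
      obtain ⟨hqne, hqP⟩ := Finset.mem_erase.mp hq
      exact ⟨he₀p q hqP, hpdisj p₀ hp₀P q hqP (Ne.symm hqne)⟩
    rcases Finset.mem_insert.mp hp with hp | hp <;>
      rcases Finset.mem_insert.mp hq with hq | hq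
    · exact absurd (hp.trans hq.symm) hpq
    · rw [hp]; exact key q hq
    · rw [hq]; exact (key p hp).symm
    · exact hpdisj p (Finset.mem_of_mem_erase hp) q (Finset.mem_of_mem_erase hq)
        (fun hh => hpq (by rw [hh]))
  · rw [Finset.biUnion_insert]
    have : (P.erase p₀).biUnion id = M \ p₀ := by
      ext g
      simp only [Finset.mem_biUnion, Finset.mem_erase, id, Finset.mem_sdiff]
      constructor
      · rintro ⟨r, ⟨hrne, hrP⟩, hgr⟩
        refine ⟨hmem r hrP g hgr, fun hgp₀ => ?_⟩
        exact Finset.disjoint_left.mp (hpdisj r hrP p₀ hp₀P hrne) hgr hgp₀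
      · rintro ⟨hgM, hgp₀⟩
        rw [← hbu] at hgM
        obtain ⟨r, hrP, hgr⟩ := Finset.mem_biUnion.mp hgM
        refine ⟨r, ⟨fun hh => hgp₀ (hh ▸ hgr), hrP⟩, hgr⟩
    rw [this]
    ext g
    simp only [Finset.mem_union, Finset.mem_insert, Finset.mem_sdiff, id]
    constructor
    · rintro (⟨h1 | h1⟩ | ⟨h1, _⟩)
      · exact Or.inl h1
      · exact Or.inr (hmem p₀ hp₀P g h1)
      · exact Or.inr h1
    · rintro (h1 | h1)
      · exact Or.inl (Or.inl h1)
      · by_cases hgp₀ : g ∈ p₀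
        · exact Or.inl (Or.inr hgp₀)
        · exact Or.inr ⟨h1, hgp₀⟩
  · intro p hp q hq hpq e he f hf
    have hgap' : ∀ e ∈ insert e₀ p₀, ∀ q ∈ P.erase p₀, ∀ f ∈ q, IsGap G e f := by
      intro e he q hq f hf
      obtain ⟨hqne, hqP⟩ := Finset.mem_erase.mp hq
      rcases Finset.mem_insert.mp he with he | he
      · rw [he]
        refine hgap f (hmem q hqP f hf) (fun hh => ?_)
        subst hh
        exact Finset.disjoint_left.mp (hpdisj q hqP p₀ hp₀P hqne) hf hf₀p₀
      · exact hgapP p₀ hp₀P q hqP (Ne.symm hqne) e he f hf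
    rcases Finset.mem_insert.mp hp with hp | hp <;>
      rcases Finset.mem_insert.mp hq with hq | hq
    · exact absurd (hp.trans hq.symm) hpq
    · rw [hp] at he; exact hgap' e he q hq f hf
    · rw [hq] at hf; exact isGap_symm (hgap' f hf p hp e he)
    · exact hgapP p (Finset.mem_of_mem_erase hp) q (Finset.mem_of_mem_erase hq)
        (fun hh => hpq (by rw [hh])) e he f hf
  · rw [Finset.card_insert_of_notMem he₀M, Finset.card_insert_of_notMem hnotP,
      Finset.card_erase_of_mem hp₀P]
    have hP1 : 1 ≤ P.card := Finset.card_pos.mpr ⟨p₀, hp₀P⟩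
    omega

lemma admissible_mono_k {G : SimpleGraph V} {k k' : ℕ} {M : Finset (Sym2 V)}
    (hkk : k ≤ k') (h : IsAdmissibleMatching G k M) : IsAdmissibleMatching G k' M := by
  obtain ⟨hm, P, h1, h2, h3, h4, h5, h6⟩ := h
  exact ⟨hm, P, h1, h2, h3, h4, by omega, h6⟩

end Aux4

section Aux5
variable {V : Type*}

/-- The inner partition conditions of `IsAdmissibleMatching`, with explicit `P`. -/
def AdmParts (G : SimpleGraph V) (k : ℕ) (M : Finset (Sym2 V))
    (P : Finset (Finset (Sym2 V))) : Prop :=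
  (∀ p ∈ P, p.Nonempty) ∧
  (∀ p ∈ P, ∀ q ∈ P, p ≠ q → Disjoint p q) ∧
  P.biUnion id = M ∧
  (∀ p ∈ P, ∀ q ∈ P, p ≠ q → ∀ e ∈ p, ∀ f ∈ q, IsGap G e f) ∧
  M.card + 1 ≤ P.card + k ∧
  ∀ p ∈ P, (SimpleGraph.induce (matchVerts p) G).IsAcyclic

lemma adm_iff {G : SimpleGraph V} {k : ℕ} {M : Finset (Sym2 V)} :
    IsAdmissibleMatching G k M ↔ IsMatchingSet G M ∧ ∃ P, AdmParts G k M P := Iff.rfl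

lemma matching_erase {G : SimpleGraph V} {M : Finset (Sym2 V)} (h : IsMatchingSet G M)
    (e₀ : Sym2 V) : IsMatchingSet G (M.erase e₀) :=
  ⟨fun e he => h.1 e (Finset.mem_of_mem_erase he),
   fun e he f hf hef v hv => h.2 e (Finset.mem_of_mem_erase he) f
     (Finset.mem_of_mem_erase hf) hef v hv⟩

/-- Remove a singleton part `{e₀}` from an admissible matching. -/
lemma admissible_shrink_singleton {G : SimpleGraph V} {k : ℕ} {M : Finset (Sym2 V)}
    {P : Finset (Finset (Sym2 V))} {e₀ : Sym2 V}
    (hmatch : IsMatchingSet G M) (hP : AdmParts G k M P)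
    (hp₀ : ({e₀} : Finset (Sym2 V)) ∈ P) :
    IsAdmissibleMatching G k (M.erase e₀) := by
  classical
  obtain ⟨hne, hpdisj, hbu, hgapP, hcard, hac⟩ := hP
  have he₀M : e₀ ∈ M := by
    rw [← hbu]; exact Finset.mem_biUnion.mpr ⟨{e₀}, hp₀, Finset.mem_singleton_self e₀⟩
  refine ⟨matching_erase hmatch e₀, P.erase {e₀}, ?_, ?_, ?_, ?_, ?_, ?_⟩
  · exact fun p hp => hne p (Finset.mem_of_mem_erase hp)
  · exact fun p hp q hq hpq => hpdisj p (Finset.mem_of_mem_erase hp)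
      q (Finset.mem_of_mem_erase hq) hpq
  · ext g
    simp only [Finset.mem_biUnion, Finset.mem_erase, id]
    constructor
    · rintro ⟨r, ⟨hrne, hrP⟩, hgr⟩
      refine ⟨fun hh => ?_, by rw [← hbu]; exact Finset.mem_biUnion.mpr ⟨r, hrP, hgr⟩⟩
      subst hh
      exact Finset.disjoint_left.mp (hpdisj r hrP {g} hp₀ hrne) hgr
        (Finset.mem_singleton_self g)
    · rintro ⟨hgne, hgM⟩
      rw [← hbu] at hgM
      obtain ⟨r, hrP, hgr⟩ := Finset.mem_biUnion.mp hgM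
      refine ⟨r, ⟨fun hh => ?_, hrP⟩, hgr⟩
      subst hh
      exact hgne (Finset.mem_singleton.mp hgr)
  · exact fun p hp q hq hpq => hgapP p (Finset.mem_of_mem_erase hp)
      q (Finset.mem_of_mem_erase hq) hpq
  · rw [Finset.card_erase_of_mem he₀M, Finset.card_erase_of_mem hp₀]
    have h1 : 1 ≤ M.card := Finset.card_pos.mpr ⟨e₀, he₀M⟩
    have h2 : 1 ≤ P.card := Finset.card_pos.mpr ⟨{e₀}, hp₀⟩
    omega
  · exact fun p hp => hac p (Finset.mem_of_mem_erase hp)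

/-- Remove one edge `e₀` from a part `p₀` which has other edges too; costs a unit of `k`. -/
lemma admissible_shrink_merge {G : SimpleGraph V} {k : ℕ} {M : Finset (Sym2 V)}
    {P : Finset (Finset (Sym2 V))} {p₀ : Finset (Sym2 V)} {e₀ : Sym2 V}
    (hmatch : IsMatchingSet G M) (hP : AdmParts G k M P)
    (hp₀ : p₀ ∈ P) (he₀ : e₀ ∈ p₀) (hbig : (p₀.erase e₀).Nonempty) (hk : 1 ≤ k) :
    IsAdmissibleMatching G (k - 1) (M.erase e₀) := by
  classical
  obtain ⟨hne, hpdisj, hbu, hgapP, hcard, hac⟩ := hP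
  have hmem : ∀ r ∈ P, ∀ g ∈ r, g ∈ M := by
    intro r hr g hg; rw [← hbu]; exact Finset.mem_biUnion.mpr ⟨r, hr, hg⟩
  have he₀M : e₀ ∈ M := hmem p₀ hp₀ e₀ he₀
  have hnotP : p₀.erase e₀ ∉ P.erase p₀ := by
    intro hmm
    obtain ⟨hne', hP'⟩ := Finset.mem_erase.mp hmm
    obtain ⟨g, hg⟩ := hbig
    exact Finset.disjoint_left.mp (hpdisj _ hP' p₀ hp₀ hne') hg (Finset.mem_of_mem_erase hg)
  refine ⟨matching_erase hmatch e₀, insert (p₀.erase e₀) (P.erase p₀), ?_, ?_, ?_, ?_, ?_, ?_⟩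
  · intro p hp
    rcases Finset.mem_insert.mp hp with hp | hp
    · rw [hp]; exact hbig
    · exact hne p (Finset.mem_of_mem_erase hp)
  · intro p hp q hq hpq
    have key : ∀ q ∈ P.erase p₀, Disjoint (p₀.erase e₀) q := by
      intro q hq
      obtain ⟨hqne, hqP⟩ := Finset.mem_erase.mp hq
      exact Finset.disjoint_of_subset_left (Finset.erase_subset e₀ p₀)
        (hpdisj p₀ hp₀ q hqP (Ne.symm hqne))
    rcases Finset.mem_insert.mp hp with hp | hp <;>
      rcases Finset.mem_insert.mp hq with hq | hq
    · exact absurd (hp.trans hq.symm) hpq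
    · rw [hp]; exact key q hq
    · rw [hq]; exact (key p hp).symm
    · exact hpdisj p (Finset.mem_of_mem_erase hp) q (Finset.mem_of_mem_erase hq)
        (fun hh => hpq (by rw [hh]))
  · ext g
    simp only [Finset.mem_biUnion, Finset.mem_insert, Finset.mem_erase, id]
    constructor
    · rintro ⟨r, hr | ⟨hrne, hrP⟩, hgr⟩
      · rw [hr] at hgr
        obtain ⟨hgne, hgp₀⟩ := Finset.mem_erase.mp hgr
        exact ⟨hgne, hmem p₀ hp₀ g hgp₀⟩
      · refine ⟨fun hh => ?_, hmem r hrP g hgr⟩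
        subst hh
        exact Finset.disjoint_left.mp (hpdisj r hrP p₀ hp₀ hrne) hgr he₀
    · intro hg
      obtain ⟨hgne, hgM⟩ := hg
      rw [← hbu] at hgM
      obtain ⟨r, hrP, hgr⟩ := Finset.mem_biUnion.mp hgM
      by_cases hrp₀ : r = p₀
      · subst hrp₀
        exact ⟨r.erase e₀, Or.inl rfl, Finset.mem_erase.mpr ⟨hgne, hgr⟩⟩
      · exact ⟨r, Or.inr ⟨hrp₀, hrP⟩, hgr⟩
  · intro p hp q hq hpq e he f hf
    have key : ∀ e ∈ p₀.erase e₀, ∀ q ∈ P.erase p₀, ∀ f ∈ q, IsGap G e f := by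
      intro e he q hq f hf
      obtain ⟨hqne, hqP⟩ := Finset.mem_erase.mp hq
      exact hgapP p₀ hp₀ q hqP (Ne.symm hqne) e (Finset.mem_of_mem_erase he) f hf
    rcases Finset.mem_insert.mp hp with hp | hp <;>
      rcases Finset.mem_insert.mp hq with hq | hq
    · exact absurd (hp.trans hq.symm) hpq
    · rw [hp] at he; exact key e he q hq f hf
    · rw [hq] at hf; exact isGap_symm (key f hf p hp e he)
    · exact hgapP p (Finset.mem_of_mem_erase hp) q (Finset.mem_of_mem_erase hq)
        (fun hh => hpq (by rw [hh])) e he f hf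
  · rw [Finset.card_erase_of_mem he₀M, Finset.card_insert_of_notMem hnotP,
      Finset.card_erase_of_mem hp₀]
    have h1 : 1 ≤ M.card := Finset.card_pos.mpr ⟨e₀, he₀M⟩
    have h2 : 1 ≤ P.card := Finset.card_pos.mpr ⟨p₀, hp₀⟩
    omega
  · intro p hp
    rcases Finset.mem_insert.mp hp with hp | hp
    · rw [hp]
      exact acyclic_induce_subset (matchVerts_mono (Finset.erase_subset e₀ p₀)) (hac p₀ hp₀)
    · exact hac p (Finset.mem_of_mem_erase hp)

lemma card_insert_aux (e₀ : Sym2 V) (M : Finset (Sym2 V)) (h : e₀ ∉ M) :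
    (insert e₀ M).card = M.card + 1 := by
  classical
  exact Finset.card_insert_of_notMem h

lemma card_erase_aux (e₀ : Sym2 V) (M : Finset (Sym2 V)) (h : e₀ ∈ M) :
    (M.erase e₀).card = M.card - 1 := by
  classical
  exact Finset.card_erase_of_mem h

lemma mem_erase_aux {e₀ f : Sym2 V} {M : Finset (Sym2 V)} :
    f ∈ M.erase e₀ ↔ f ≠ e₀ ∧ f ∈ M := by
  classical
  exact Finset.mem_erase

lemma erase_nonempty_aux {p₀ : Finset (Sym2 V)} {e₀ : Sym2 V} (h : e₀ ∈ p₀)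
    (hne : p₀ ≠ {e₀}) : (p₀.erase e₀).Nonempty := by
  classical
  rcases Finset.eq_empty_or_nonempty (p₀.erase e₀) with hemp | hne'
  · exfalso
    apply hne
    apply Finset.eq_singleton_iff_unique_mem.mpr
    refine ⟨h, fun x hx => ?_⟩
    by_contra hxne
    have hxe : x ∈ p₀.erase e₀ := Finset.mem_erase.mpr ⟨hxne, hx⟩
    rw [hemp] at hxe
    exact absurd hxe (Finset.notMem_empty x)
  · exact hne'

lemma mem_of_parts {G : SimpleGraph V} {k : ℕ} {M : Finset (Sym2 V)}
    {P : Finset (Finset (Sym2 V))} (hP : AdmParts G k M P) {e : Sym2 V} (he : e ∈ M) :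
    ∃ p ∈ P, e ∈ p := by
  obtain ⟨_, _, hbu, _⟩ := hP
  rw [← hbu] at he
  exact Finset.mem_biUnion.mp he

lemma card_eq_sum_parts {G : SimpleGraph V} {k : ℕ} {M : Finset (Sym2 V)}
    {P : Finset (Finset (Sym2 V))} (hP : AdmParts G k M P) :
    M.card = ∑ p ∈ P, p.card := by
  obtain ⟨_, hdisj, hbu, _⟩ := hP
  rw [← hbu]
  exact Finset.card_biUnion (fun p hp q hq h => hdisj p hp q hq h)

end Aux5

/-- Recursion for the `k`-admissible matching number of a forest with a distant leaf
(vertex `n-1` of `Fin n`, with neighbor `n-2`, whose other neighbors are the leaves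
in `T` together with `n-3`): for `1 ≤ k ≤ ν(G)`,
`aim(G,k) = max { aim(G₁,k), aim(G₂,k-1)+1, aim(G₃,k)+1 }`, where `G₁, G₂, G₃` are
the induced subgraphs obtained by deleting the last one, two, three vertices
respectively, and the middle term is omitted when `k = 1`. -/
theorem stmt_8 {n : ℕ} (hn : 3 ≤ n) (G : SimpleGraph (Fin n))
    [DecidableRel G.Adj] (hforest : G.IsAcyclic)
    (hnu : 3 ≤ matchingNumber G)
    (vn : Fin n) (vw : Fin n) (vu : Fin n)
    (hvn : (vn : ℕ) = n - 1) (hvw : (vw : ℕ) = n - 2) (hvu : (vu : ℕ) = n - 3)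
    (hadj : G.Adj vw vn) (hleaf : G.degree vn = 1)
    (T : Finset (Fin n)) (hT : ∀ i ∈ T, G.degree i = 1)
    (hvnT : vn ∉ T) (hvuT : vu ∉ T)
    (hnbr : G.neighborFinset vw = insert vu (insert vn T))
    (hdegu : 1 ≤ G.degree vu)
    (k : ℕ) (h1 : 1 ≤ k) (h2 : k ≤ matchingNumber G) :
    aim G k =
      if k = 1 then
        max (aim (delV G {vn}) k) (aim (delV G {vn, vw, vu}) k + 1)
      else
        max (aim (delV G {vn}) k)
          (max (aim (delV G {vn, vw}) (k - 1) + 1)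
            (aim (delV G {vn, vw, vu}) k + 1)) := by
  set e₀ : Sym2 (Fin n) := s(vn, vw) with he₀def
  have hvne₀ : vn ∈ e₀ := Sym2.mem_mk_left vn vw
  have hvwe₀ : vw ∈ e₀ := Sym2.mem_mk_right vn vw
  have he₀E : e₀ ∈ G.edgeSet := by rw [he₀def, SimpleGraph.mem_edgeSet]; exact hadj.symm
  have memNF : ∀ a b : Fin n, b ∈ G.neighborFinset a ↔ G.Adj a b := by
    intro a b; rw [SimpleGraph.mem_neighborFinset]
  have hadjwu : G.Adj vw vu := by
    rw [← memNF, hnbr]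
    exact Finset.mem_insert_self vu _
  have hNn : ∀ z, G.Adj vn z → z = vw := by
    intro z hz
    have hz' : z ∈ G.neighborFinset vn := (memNF vn z).mpr hz
    have hw' : vw ∈ G.neighborFinset vn := (memNF vn vw).mpr hadj.symm
    have hcard : (G.neighborFinset vn).card ≤ 1 := le_of_eq hleaf
    exact Finset.card_le_one.mp hcard z hz' vw hw'
  have hNt : ∀ t ∈ T, ∀ z, G.Adj t z → z = vw := by
    intro t ht z hz
    have hz' : z ∈ G.neighborFinset t := (memNF t z).mpr hz
    have hwt : G.Adj vw t := by
      rw [← memNF, hnbr]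
      exact Finset.mem_insert_of_mem (Finset.mem_insert_of_mem ht)
    have hw' : vw ∈ G.neighborFinset t := (memNF t vw).mpr hwt.symm
    have hcard : (G.neighborFinset t).card ≤ 1 := le_of_eq (hT t ht)
    exact Finset.card_le_one.mp hcard z hz' vw hw'
  have hwnbr : ∀ z, G.Adj vw z → z = vu ∨ z = vn ∨ z ∈ T := by
    intro z hz
    have hz' : z ∈ G.neighborFinset vw := (memNF vw z).mpr hz
    rw [hnbr] at hz'
    simpa using hz'
  have avoidT : ∀ f : Sym2 (Fin n), f ∈ G.edgeSet → (∀ v ∈ f, v ≠ vw) →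
      ∀ v ∈ f, v ∉ T := by
    intro f hf hnw v hv hvT
    have hfe : f = s(v, vw) := leaf_edge (hNt v hvT) hf hv
    exact hnw vw (by rw [hfe]; exact Sym2.mem_mk_right v vw) rfl
  have gap_e₀ : ∀ f : Sym2 (Fin n), f ∈ G.edgeSet →
      (∀ v ∈ f, v ≠ vn ∧ v ≠ vw ∧ v ≠ vu ∧ v ∉ T) → IsGap G e₀ f := by
    intro f hfE hfav
    constructor
    · intro v hv hvf
      rcases Sym2.mem_iff.mp (he₀def ▸ hv) with rfl | rfl
      · exact (hfav v hvf).1 rfl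
      · exact (hfav v hvf).2.1 rfl
    · intro u v hu hvf hadjuv
      rcases Sym2.mem_iff.mp (he₀def ▸ hu) with rfl | rfl
      · exact (hfav v hvf).2.1 (hNn v hadjuv)
      · rcases hwnbr v hadjuv with h | h | h
        · exact (hfav v hvf).2.2.1 h
        · exact (hfav v hvf).1 h
        · exact (hfav v hvf).2.2.2 h
  -- the three lower bounds
  have hge1 : aim (delV G {vn}) k ≤ aim G k := by
    obtain ⟨M, hM, hMc⟩ := exists_aim (delV G {vn}) k h1
    rw [← hMc]
    exact le_aim (admissible_from_delV hforest hM)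
  have hge3 : aim (delV G {vn, vw, vu}) k + 1 ≤ aim G k := by
    obtain ⟨M, hM, hMc⟩ := exists_aim (delV G {vn, vw, vu}) k h1
    have hMG := admissible_from_delV hforest hM
    have hav : ∀ f ∈ M, ∀ v ∈ f, v ∉ ({vn, vw, vu} : Set (Fin n)) :=
      fun f hf => (mem_edgeSet_delV.mp (hM.1.1 f hf)).2
    have hgap : ∀ f ∈ M, IsGap G e₀ f := by
      intro f hf
      apply gap_e₀ f (hMG.1.1 f hf)
      intro v hv
      have h3 := hav f hf v hv
      simp only [Set.mem_insert_iff, Set.mem_singleton_iff, not_or] at h3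
      refine ⟨h3.1, h3.2.1, h3.2.2, ?_⟩
      refine avoidT f (hMG.1.1 f hf) ?_ v hv
      intro x hx
      have hx' := hav f hf x hx
      simp only [Set.mem_insert_iff, Set.mem_singleton_iff, not_or] at hx'
      exact hx'.2.1
    obtain ⟨hins, hnotin⟩ := admissible_insert_single hforest hMG he₀E hgap
    have hlea := le_aim hins
    have hci := card_insert_aux e₀ M hnotin
    omega
  have hge2 : k ≠ 1 → aim (delV G {vn, vw}) (k - 1) + 1 ≤ aim G k := by
    intro hk1
    obtain ⟨M, hM, hMc⟩ := exists_aim (delV G {vn, vw}) (k - 1) (by omega)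
    have hMG := admissible_from_delV hforest hM
    have hav : ∀ f ∈ M, ∀ v ∈ f, v ≠ vn ∧ v ≠ vw := by
      intro f hf v hv
      have hv' := (mem_edgeSet_delV.mp (hM.1.1 f hf)).2 v hv
      simp only [Set.mem_insert_iff, Set.mem_singleton_iff, not_or] at hv'
      exact hv'
    have havT : ∀ f ∈ M, ∀ v ∈ f, v ∉ T := by
      intro f hf
      exact avoidT f (hMG.1.1 f hf) (fun x hx => (hav f hf x hx).2)
    by_cases hvuM : ∃ f₀ ∈ M, vu ∈ f₀
    · obtain ⟨f₀, hf₀, hvuf₀⟩ := hvuM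
      have hdisj₀ : ∀ f ∈ M, ∀ v ∈ e₀, v ∉ f := by
        intro f hf v hv hvf
        rcases Sym2.mem_iff.mp (he₀def ▸ hv) with rfl | rfl
        · exact (hav f hf _ hvf).1 rfl
        · exact (hav f hf _ hvf).2 rfl
      have hgap : ∀ f ∈ M, f ≠ f₀ → IsGap G e₀ f := by
        intro f hf hne'
        apply gap_e₀ f (hMG.1.1 f hf)
        intro v hv
        refine ⟨(hav f hf v hv).1, (hav f hf v hv).2, ?_, havT f hf v hv⟩
        intro hveq
        subst hveq
        exact hMG.1.2 f hf f₀ hf₀ hne' v hv hvuf₀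
      obtain ⟨hins, hnotin⟩ := admissible_insert_merge hforest hMG he₀E hf₀ hdisj₀ hgap
      have hk' : k - 1 + 1 = k := by omega
      rw [hk'] at hins
      have hlea := le_aim hins
      have hci := card_insert_aux e₀ M hnotin
      omega
    · push_neg at hvuM
      have hgap : ∀ f ∈ M, IsGap G e₀ f := by
        intro f hf
        apply gap_e₀ f (hMG.1.1 f hf)
        intro v hv
        refine ⟨(hav f hf v hv).1, (hav f hf v hv).2, ?_, havT f hf v hv⟩
        intro hveq
        subst hveq
        exact hvuM f hf hv
      obtain ⟨hins, hnotin⟩ := admissible_insert_single hforest hMG he₀E hgap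
      have hins' := admissible_mono_k (show k - 1 ≤ k by omega) hins
      have hlea := le_aim hins'
      have hci := card_insert_aux e₀ M hnotin
      omega
  -- the upper bound
  have hmain : aim G k ≤ aim (delV G {vn}) k ∨
      (k ≠ 1 ∧ aim G k ≤ aim (delV G {vn, vw}) (k - 1) + 1) ∨
      aim G k ≤ aim (delV G {vn, vw, vu}) k + 1 := by
    obtain ⟨M, hM, hMc⟩ := exists_aim G k h1
    by_cases hvnM : ∃ e ∈ M, vn ∈ e
    · obtain ⟨e, heM, hvne⟩ := hvnM
      have hee : e = e₀ := leaf_edge hNn (hM.1.1 e heM) hvne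
      have he₀M : e₀ ∈ M := hee ▸ heM
      obtain ⟨hmatch, P, hparts⟩ := adm_iff.mp hM
      obtain ⟨c1, c2, c3, c4, c5, c6⟩ := id hparts
      have hMcpos : 1 ≤ M.card := Finset.card_pos.mpr ⟨e₀, he₀M⟩
      obtain ⟨p₀, hp₀P, he₀p₀⟩ := mem_of_parts hparts he₀M
      have hMfree : ∀ f ∈ M, f ≠ e₀ → ∀ v ∈ f, v ≠ vn ∧ v ≠ vw := by
        intro f hf hne' v hv
        have hnot := hmatch.2 f hf e₀ he₀M hne' v hv
        constructor
        · intro hveq; subst hveq; exact hnot hvne₀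
        · intro hveq; subst hveq; exact hnot hvwe₀
      have hvuclaim : ∀ f ∈ M, vu ∈ f → f ∈ p₀ := by
        intro f hf hvuf
        obtain ⟨q, hqP, hfq⟩ := mem_of_parts hparts hf
        by_cases hq : q = p₀
        · rw [← hq]; exact hfq
        exfalso
        have hg := c4 p₀ hp₀P q hqP (fun hh => hq (by rw [hh])) e₀ he₀p₀ f hfq
        exact hg.2 vw vu hvwe₀ hvuf hadjwu
      have hcard' := card_erase_aux e₀ M he₀M
      by_cases hsing : p₀ = {e₀}
      · refine Or.inr (Or.inr ?_)
        have hshrunk := admissible_shrink_singleton hmatch hparts (hsing ▸ hp₀P)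
        have hav3 : ∀ f ∈ M, f ≠ e₀ → ∀ v ∈ f, v ∉ ({vn, vw, vu} : Set (Fin n)) := by
          intro f hfM hfne v hv hvs
          simp only [Set.mem_insert_iff, Set.mem_singleton_iff] at hvs
          rcases hvs with rfl | rfl | rfl
          · exact (hMfree f hfM hfne v hv).1 rfl
          · exact (hMfree f hfM hfne v hv).2 rfl
          · have hfp₀ := hvuclaim f hfM hv
            rw [hsing] at hfp₀
            exact hfne (Finset.mem_singleton.mp hfp₀)
        have h3' := admissible_to_delV {vn, vw, vu} hshrunk
          (fun f hf => hav3 f (mem_erase_aux.mp hf).2 (mem_erase_aux.mp hf).1)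
        have hlea := le_aim h3'
        omega
      · have hbig := erase_nonempty_aux he₀p₀ hsing
        have hkne1 : k ≠ 1 := by
          intro hk1
          have hcardM := card_eq_sum_parts hparts
          have h2le : 2 ≤ p₀.card := by
            obtain ⟨g, hg⟩ := hbig
            have hgp := (mem_erase_aux.mp hg).2
            have hgne := (mem_erase_aux.mp hg).1
            exact Finset.one_lt_card.mpr ⟨e₀, he₀p₀, g, hgp, fun hh => hgne hh.symm⟩
          have hsum : ∑ _p ∈ P.erase p₀, 1 ≤ ∑ p ∈ P.erase p₀, p.card :=
            Finset.sum_le_sum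
              (fun p hp => Finset.card_pos.mpr (c1 p (Finset.mem_of_mem_erase hp)))
          have hadd : p₀.card + ∑ p ∈ P.erase p₀, p.card = ∑ p ∈ P, p.card :=
            Finset.add_sum_erase P _ hp₀P
          have hPc : (P.erase p₀).card = P.card - 1 := Finset.card_erase_of_mem hp₀P
          have hPpos : 1 ≤ P.card := Finset.card_pos.mpr ⟨p₀, hp₀P⟩
          rw [Finset.sum_const, smul_eq_mul, mul_one] at hsum
          omega
        refine Or.inr (Or.inl ⟨hkne1, ?_⟩)
        have hshrunk := admissible_shrink_merge hmatch hparts hp₀P he₀p₀ hbig h1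
        have hav2 : ∀ f ∈ M, f ≠ e₀ → ∀ v ∈ f, v ∉ ({vn, vw} : Set (Fin n)) := by
          intro f hfM hfne v hv hvs
          simp only [Set.mem_insert_iff, Set.mem_singleton_iff] at hvs
          rcases hvs with rfl | rfl
          · exact (hMfree _ hfM hfne _ hv).1 rfl
          · exact (hMfree _ hfM hfne _ hv).2 rfl
        have h2' := admissible_to_delV {vn, vw} hshrunk
          (fun f hf => hav2 f (mem_erase_aux.mp hf).2 (mem_erase_aux.mp hf).1)
        have hlea := le_aim h2'
        omega
    · push_neg at hvnM
      left
      have h1' := admissible_to_delV {vn} hM (by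
        intro e he v hv hvs
        rw [Set.mem_singleton_iff] at hvs
        subst hvs
        exact hvnM e he hv)
      rw [← hMc]
      exact le_aim h1'
  by_cases hk1 : k = 1
  · rw [if_pos hk1]
    apply le_antisymm
    · rcases hmain with h | ⟨hne', _⟩ | h
      · exact le_trans h (le_max_left _ _)
      · exact absurd hk1 hne'
      · exact le_trans h (le_max_right _ _)
    · exact max_le hge1 hge3
  · rw [if_neg hk1]
    apply le_antisymm
    · rcases hmain with h | ⟨_, h⟩ | h
      · exact le_trans h (le_max_left _ _)
      · exact le_trans h (le_trans (le_max_left _ _) (le_max_right _ _))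
      · exact le_trans h (le_trans (le_max_right _ _) (le_max_right _ _))
    · exact max_le hge1 (max_le (hge2 hk1) hge3)

end
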